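/- arXiv:2503.07558 — 6 statements merged into one kernel-verified Lean document; each statement's English description precedes it below -/
import Mathlib

section
/- Let d and n be positive natural numbers and let p_1, …, p_n be points in the Euclidean space ℝ^d. Then the map sending a point x to the vector of distances (dist(p_1, x), dist(p_2, x), …, dist(p_n, x)) ∈ ℝ^n is injective on the convex hull conv{p_1, …, p_n}; that is, if x and y both lie in conv{p_1, …, p_n} and dist(p_i, x) = dist(p_i, y) for every i = 1, …, n, then x = y. -/
/-- The map sending a point `x` in Euclidean space `ℝ^d` to the vector of distances
`(dist (p 1) x, …, dist (p n) x)` is injective on the convex hull of `{p 1, …, p n}`. -/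
theorem distance_map_injective_on_convex_hull
    (d n : ℕ) (hd : 0 < d) (hn : 0 < n)
    (p : Fin n → EuclideanSpace ℝ (Fin d))
    (x y : EuclideanSpace ℝ (Fin d))
    (hx : x ∈ convexHull ℝ (Set.range p))
    (hy : y ∈ convexHull ℝ (Set.range p))
    (h : ∀ i : Fin n, dist (p i) x = dist (p i) y) :
    x = y := by
  set c : ℝ := (‖x‖^2 - ‖y‖^2)/2 with hc
  have key : ∀ i : Fin n, inner ℝ (x - y) (p i) = c := by
    intro i
    have hd := h i
    rw [dist_eq_norm, dist_eq_norm] at hd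
    have h2 : ‖p i - x‖^2 = ‖p i - y‖^2 := by rw [hd]
    rw [norm_sub_sq_real, norm_sub_sq_real] at h2
    have : inner ℝ (x - y) (p i) = (inner ℝ (p i) x - inner ℝ (p i) y : ℝ) := by
      rw [real_inner_comm, inner_sub_right]
    rw [this, hc]
    linarith
  set S : Set (EuclideanSpace ℝ (Fin d)) := {w | (inner ℝ (x - y) w : ℝ) = c} with hS
  have hconv : Convex ℝ S := convex_hyperplane ((innerSL ℝ (x - y)).toLinearMap.isLinear) c
  have hsub : Set.range p ⊆ S := by
    rintro _ ⟨i, rfl⟩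
    exact key i
  have hhull : convexHull ℝ (Set.range p) ⊆ S := convexHull_min hsub hconv
  have hxS : (inner ℝ (x - y) x : ℝ) = c := hhull hx
  have hyS : (inner ℝ (x - y) y : ℝ) = c := hhull hy
  have : (inner ℝ (x - y) (x - y) : ℝ) = 0 := by
    rw [inner_sub_right, hxS, hyS, sub_self]
  have := inner_self_eq_zero.mp this
  exact sub_eq_zero.mp this
end

section
/- Let p_1, …, p_n be points in the Euclidean space ℝ^d and let x, x' ∈ conv{p_1, …, p_n}. If dist(p_i, x') ≥ dist(p_i, x) for every i = 1, …, n, then x' = x. -/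
/-- If `x, x'` lie in the convex hull of `{p 1, …, p n}` in Euclidean space and
`dist (p i) x' ≥ dist (p i) x` for every `i`, then `x' = x`. -/
theorem eq_of_dist_ge_on_convex_hull
    (d n : ℕ) (p : Fin n → EuclideanSpace ℝ (Fin d))
    (x x' : EuclideanSpace ℝ (Fin d))
    (hx : x ∈ convexHull ℝ (Set.range p))
    (hx' : x' ∈ convexHull ℝ (Set.range p))
    (h : ∀ i : Fin n, dist (p i) x ≤ dist (p i) x') :
    x' = x := by
  set S : Set (EuclideanSpace ℝ (Fin d)) := {y | dist y x ≤ dist y x'} with hSdef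
  have key : ∀ y : EuclideanSpace ℝ (Fin d),
      y ∈ S ↔ inner ℝ y (x' - x) ≤ (‖x'‖ ^ 2 - ‖x‖ ^ 2) / (2 : ℝ) := by
    intro y
    have e1 : dist y x ^ 2 = ‖y‖ ^ 2 - 2 * inner ℝ y x + ‖x‖ ^ 2 := by
      rw [dist_eq_norm]; exact norm_sub_sq_real y x
    have e2 : dist y x' ^ 2 = ‖y‖ ^ 2 - 2 * inner ℝ y x' + ‖x'‖ ^ 2 := by
      rw [dist_eq_norm]; exact norm_sub_sq_real y x'
    have hiff : dist y x ≤ dist y x' ↔ dist y x ^ 2 ≤ dist y x' ^ 2 := by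
      constructor
      · intro hle; exact pow_le_pow_left₀ dist_nonneg hle 2
      · intro hle; exact (pow_le_pow_iff_left₀ dist_nonneg dist_nonneg (by norm_num)).mp hle
    have e3 : (inner ℝ y (x' - x) : ℝ) = inner ℝ y x' - inner ℝ y x := inner_sub_right y x' x
    constructor
    · intro hy
      have := hiff.mp hy
      rw [e1, e2] at this
      rw [e3]; linarith
    · intro hy
      rw [e3] at hy
      apply hiff.mpr
      rw [e1, e2]; linarith
  have hconv : Convex ℝ S := by
    have : S = {y : EuclideanSpace ℝ (Fin d) |
        inner ℝ y (x' - x) ≤ (‖x'‖ ^ 2 - ‖x‖ ^ 2) / (2 : ℝ)} := by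
      ext y; exact key y
    rw [this]
    exact convex_halfSpace_le ⟨fun a b => inner_add_left a b _,
      fun c a => real_inner_smul_left a _ c⟩ _
  have hsub : convexHull ℝ (Set.range p) ⊆ S :=
    convexHull_min (by rintro _ ⟨i, rfl⟩; exact h i) hconv
  have hx'S : dist x' x ≤ dist x' x' := hsub hx'
  rw [dist_self] at hx'S
  exact dist_le_zero.mp hx'S
end

section
/- Let p_1, …, p_n be points in the Euclidean space ℝ^d and let 𝒳 be a subset of the convex hull conv{p_1, …, p_n}. For each x ∈ 𝒳 define the feasible-report set L_x = { y ∈ ℝ^n : y_i ≥ dist(p_i, x) for all i, and there exists x' ∈ 𝒳 with y_i = dist(p_i, x') for all i }. Then the source is identifiable: for any two distinct points x_1 ≠ x_2 in 𝒳, the sets L_{x_1} and L_{x_2} are disjoint, i.e., L_{x_1} ∩ L_{x_2} = ∅. -/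
open scoped RealInnerProductSpace
open Finset in
lemma eq_of_forall_dist_le' {d n : ℕ} (p : Fin n → EuclideanSpace ℝ (Fin d))
    {x' z : EuclideanSpace ℝ (Fin d)} (hx' : x' ∈ convexHull ℝ (Set.range p))
    (h : ∀ i, dist (p i) z ≤ dist (p i) x') : x' = z := by
  rw [convexHull_range_eq_exists_affineCombination] at hx'
  obtain ⟨s, w, hw0, hw1, hx⟩ := hx'
  rw [Finset.affineCombination_eq_linear_combination _ _ _ hw1] at hx
  have h1 : ∑ i ∈ s, w i * ⟪p i, x'⟫ = ⟪x', x'⟫ := by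
    rw [← hx, sum_inner]
    simp only [real_inner_smul_left]
  have h2 : ∑ i ∈ s, w i * ⟪p i, z⟫ = ⟪x', z⟫ := by
    conv_rhs => rw [← hx]
    rw [sum_inner]
    simp only [real_inner_smul_left]
  have key : ∑ i ∈ s, w i * (dist (p i) x' ^ 2 - dist (p i) z ^ 2)
      = -(dist x' z ^ 2) := by
    have expand : ∀ i, dist (p i) x' ^ 2 - dist (p i) z ^ 2
        = (‖x'‖ ^ 2 - ‖z‖ ^ 2) - 2 * ⟪p i, x'⟫ + 2 * ⟪p i, z⟫ := by
      intro i
      rw [dist_eq_norm, dist_eq_norm, norm_sub_sq_real, norm_sub_sq_real]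
      ring
    calc ∑ i ∈ s, w i * (dist (p i) x' ^ 2 - dist (p i) z ^ 2)
        = (∑ i ∈ s, w i) * (‖x'‖ ^ 2 - ‖z‖ ^ 2)
            - 2 * ∑ i ∈ s, w i * ⟪p i, x'⟫ + 2 * ∑ i ∈ s, w i * ⟪p i, z⟫ := by
          rw [Finset.sum_mul, Finset.mul_sum, Finset.mul_sum, ← Finset.sum_sub_distrib,
            ← Finset.sum_add_distrib]
          refine Finset.sum_congr rfl fun i _ => ?_
          rw [expand i]; ring
      _ = -(dist x' z ^ 2) := by
          rw [hw1, h1, h2, dist_eq_norm, norm_sub_sq_real,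
            real_inner_self_eq_norm_sq]
          ring
  have nonneg : 0 ≤ ∑ i ∈ s, w i * (dist (p i) x' ^ 2 - dist (p i) z ^ 2) :=
    Finset.sum_nonneg fun i hi => mul_nonneg (hw0 i hi)
      (by nlinarith [h i, dist_nonneg (x := p i) (y := z)])
  have : dist x' z = 0 := by nlinarith [dist_nonneg (x := x') (y := z)]
  exact dist_eq_zero.mp this

/-- In the location signal network model, if all possible source locations `𝒳` lie inside
the convex hull of the observers' locations, then the source is identifiable: for distinct
`x₁ ≠ x₂` in `𝒳`, the feasible-report sets `L x₁` and `L x₂` are disjoint. -/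
theorem location_source_identifiable_of_subset_convexHull
    (d n : ℕ) (p : Fin n → EuclideanSpace ℝ (Fin d))
    (X : Set (EuclideanSpace ℝ (Fin d)))
    (hX : X ⊆ convexHull ℝ (Set.range p))
    (L : EuclideanSpace ℝ (Fin d) → Set (Fin n → ℝ))
    (hL : ∀ x, L x = { y : Fin n → ℝ |
      (∀ i, dist (p i) x ≤ y i) ∧ ∃ x' ∈ X, ∀ i, y i = dist (p i) x' })
    (x₁ x₂ : EuclideanSpace ℝ (Fin d))
    (hx₁ : x₁ ∈ X) (hx₂ : x₂ ∈ X) (hne : x₁ ≠ x₂) :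
    L x₁ ∩ L x₂ = ∅ := by
  ext y
  simp only [Set.mem_inter_iff, Set.mem_empty_iff_false, iff_false]
  rintro ⟨hy₁, hy₂⟩
  rw [hL x₁] at hy₁
  rw [hL x₂] at hy₂
  obtain ⟨hge₁, x', hx', hy'⟩ := hy₁
  obtain ⟨hge₂, -⟩ := hy₂
  have e₁ : x' = x₁ := eq_of_forall_dist_le' p (hX hx')
    (fun i => by rw [← hy' i]; exact hge₁ i)
  have e₂ : x' = x₂ := eq_of_forall_dist_le' p (hX hx')
    (fun i => by rw [← hy' i]; exact hge₂ i)
  exact hne (e₁ ▸ e₂)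
end

section
/- Let p_1, …, p_n be points in the Euclidean space ℝ^d, let 𝒳 ⊆ ℝ^d, and for each x ∈ 𝒳 define the feasible-report set L_x = { y ∈ ℝ^n : y_i ≥ dist(p_i, x) for all i, and there exists x' ∈ 𝒳 with y_i = dist(p_i, x') for all i }. Suppose u ∈ ℝ^d is a unit vector with ⟨p_i, u⟩ ≥ 0 for every i, suppose β > α > 0 are reals, and suppose that the two distinct points x_1 = −α u and x_2 = −β u both belong to 𝒳. Then the vector (dist(p_1, x_2), …, dist(p_n, x_2)) ∈ ℝ^n belongs to L_{x_1} ∩ L_{x_2}; in particular L_{x_1} ∩ L_{x_2} ≠ ∅, so the source is not identifiable. -/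
open scoped RealInnerProductSpace

/-- If `𝒳` contains two distinct points `x₁ = -α • u` and `x₂ = -β • u` (with `β > α > 0`)
on the far side of a separating hyperplane with unit normal `u` satisfying `⟪p i, u⟫ ≥ 0`
for all observers, then the vector of distances to `x₂` lies in `L x₁ ∩ L x₂`; in
particular `L x₁ ∩ L x₂ ≠ ∅`, so the source is not identifiable. -/
theorem location_source_not_identifiable_outside_convexHull
    (d n : ℕ) (p : Fin n → EuclideanSpace ℝ (Fin d))
    (X : Set (EuclideanSpace ℝ (Fin d)))
    (L : EuclideanSpace ℝ (Fin d) → Set (Fin n → ℝ))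
    (hL : ∀ x, L x = { y : Fin n → ℝ |
      (∀ i, dist (p i) x ≤ y i) ∧ ∃ x' ∈ X, ∀ i, y i = dist (p i) x' })
    (u : EuclideanSpace ℝ (Fin d)) (hu : ‖u‖ = 1)
    (hpu : ∀ i, 0 ≤ ⟪p i, u⟫)
    (α β : ℝ) (hα : 0 < α) (hαβ : α < β)
    (x₁ x₂ : EuclideanSpace ℝ (Fin d))
    (hx₁def : x₁ = (-α) • u) (hx₂def : x₂ = (-β) • u)
    (hx₁ : x₁ ∈ X) (hx₂ : x₂ ∈ X) :
    (fun i => dist (p i) x₂) ∈ L x₁ ∩ L x₂ ∧ (L x₁ ∩ L x₂).Nonempty := by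

  have key : ∀ i, dist (p i) x₁ ≤ dist (p i) x₂ := by
    intro i
    have h1 : dist (p i) x₁ = ‖p i + α • u‖ := by
      rw [hx₁def, dist_eq_norm, neg_smul, sub_neg_eq_add]
    have h2 : dist (p i) x₂ = ‖p i + β • u‖ := by
      rw [hx₂def, dist_eq_norm, neg_smul, sub_neg_eq_add]
    rw [h1, h2]
    have e1 : ‖p i + α • u‖ ^ 2 = ‖p i‖ ^ 2 + 2 * (α * ⟪p i, u⟫) + α ^ 2 := by
      rw [norm_add_sq_real, real_inner_smul_right, norm_smul, Real.norm_eq_abs, hu,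
        mul_one, sq_abs]
    have e2 : ‖p i + β • u‖ ^ 2 = ‖p i‖ ^ 2 + 2 * (β * ⟪p i, u⟫) + β ^ 2 := by
      rw [norm_add_sq_real, real_inner_smul_right, norm_smul, Real.norm_eq_abs, hu,
        mul_one, sq_abs]
    have hsq : ‖p i + α • u‖ ^ 2 ≤ ‖p i + β • u‖ ^ 2 := by
      rw [e1, e2]; nlinarith [hpu i]
    have := Real.sqrt_le_sqrt hsq
    rwa [Real.sqrt_sq (norm_nonneg _), Real.sqrt_sq (norm_nonneg _)] at this
  have hmem : (fun i => dist (p i) x₂) ∈ L x₁ ∩ L x₂ := by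
    constructor
    · rw [hL]
      exact ⟨key, x₂, hx₂, fun i => rfl⟩
    · rw [hL]
      exact ⟨fun i => le_refl _, x₂, hx₂, fun i => rfl⟩
  exact ⟨hmem, ⟨_, hmem⟩⟩
end

section
/- Let Y be a nonempty finite type of signal values, let n ≥ 1, let 𝒳 be a type of source signals, and let L : 𝒳 → Set (probability mass functions on (Fin n → Y)) be a model specification that is NOT source-identifiable, i.e., there exist x_1 ≠ x_2 in 𝒳 and a probability mass function D with D ∈ L(x_1) ∩ L(x_2). Then there is no payoff function u assigning a real number u(x̂, D̂, y) to each reported source value x̂ ∈ 𝒳, reported distribution D̂, and realized signal profile y ∈ (Fin n → Y), such that truthful reporting is strictly optimal in expectation: that is, there is no u with the property that for every x ∈ 𝒳, every D' ∈ L(x), and every x' ∈ 𝒳 with x' ≠ x, the expected payoff Σ_y D'(y)·u(x, D', y) is strictly greater than Σ_y D'(y)·u(x', D', y). -/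
/-- Impossibility of strictly truthful elicitation when the source is not identifiable:
if there exist distinct source signals `x₁ ≠ x₂` whose feasible sets of signal
distributions `L x₁` and `L x₂` share a common distribution, then no payoff function
`u (x̂, D̂, y)` makes truthful reporting of the source's value strictly optimal in
expectation for every true value `x`, every feasible distribution `D' ∈ L x`, and
every deviating report `x' ≠ x`. -/
theorem no_strictly_truthful_mechanism_of_not_identifiable
    (Y : Type) [Fintype Y] [Nonempty Y]
    (n : ℕ) (hn : 1 ≤ n)
    (X : Type)
    (L : X → Set (PMF (Fin n → Y)))
    (hni : ∃ x₁ x₂ : X, x₁ ≠ x₂ ∧ (L x₁ ∩ L x₂).Nonempty) :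
    ¬ ∃ u : X → PMF (Fin n → Y) → (Fin n → Y) → ℝ,
        ∀ x : X, ∀ D' ∈ L x, ∀ x' : X, x' ≠ x →
          ∑ y : Fin n → Y, (D' y).toReal * u x' D' y
            < ∑ y : Fin n → Y, (D' y).toReal * u x D' y := by
  rintro ⟨u, hu⟩
  obtain ⟨x₁, x₂, hne, D, hD₁, hD₂⟩ := hni
  exact lt_asymm (hu x₁ D hD₁ x₂ hne.symm) (hu x₂ D hD₂ x₁ hne)
end

section
/- Fix n ≥ 1 and positive reals p_1, …, p_n (throttling caps). For each x > 0, let L_x be the set of product probability mass functions D_1 × ⋯ × D_n on (ℝ≥0)^n such that for every i the support of D_i is contained in the interval [0, min(p_i, x)] (this set is contained in the bandwidth model specification, in which each D_i must have support contained in [0, x]). Then the source is not identifiable: for any two reals x_1 ≠ x_2 with x_1 > max_i p_i and x_2 > max_i p_i, every product D_1 × ⋯ × D_n of probability mass functions with support(D_i) ⊆ [0, p_i] for all i belongs to L_{x_1} ∩ L_{x_2}; in particular, L_{x_1} ∩ L_{x_2} ≠ ∅. -/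
/-- In the bandwidth signal network model with throttling caps `p i`, the source is not
identifiable: for any `x₁ ≠ x₂` both exceeding every cap `p i`, every tuple of observer
distributions (identified with the product distribution) whose `i`-th marginal has support
contained in `[0, p i]` belongs to `L x₁ ∩ L x₂`; in particular `L x₁ ∩ L x₂ ≠ ∅`. -/
theorem bandwidth_source_not_identifiable
    (n : ℕ) (hn : 1 ≤ n)
    (p : Fin n → ℝ) (hp : ∀ i, 0 < p i)
    (L : ℝ → Set (Fin n → PMF NNReal))
    (hL : ∀ x, L x = { D : Fin n → PMF NNReal |
      ∀ i, (D i).support ⊆ { r : NNReal | (r : ℝ) ∈ Set.Icc 0 (min (p i) x) } })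
    (x₁ x₂ : ℝ) (hne : x₁ ≠ x₂)
    (h₁ : ∀ i, p i < x₁) (h₂ : ∀ i, p i < x₂) :
    (∀ D : Fin n → PMF NNReal,
        (∀ i, (D i).support ⊆ { r : NNReal | (r : ℝ) ∈ Set.Icc 0 (p i) }) →
        D ∈ L x₁ ∩ L x₂) ∧
      (L x₁ ∩ L x₂).Nonempty := by
  have key : ∀ D : Fin n → PMF NNReal,
      (∀ i, (D i).support ⊆ { r : NNReal | (r : ℝ) ∈ Set.Icc 0 (p i) }) →
      D ∈ L x₁ ∩ L x₂ := by
    intro D hD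
    constructor
    · rw [hL]
      intro i r hr
      obtain ⟨h0, h1⟩ := hD i hr
      exact ⟨h0, le_min h1 (h1.trans (h₁ i).le)⟩
    · rw [hL]
      intro i r hr
      obtain ⟨h0, h1⟩ := hD i hr
      exact ⟨h0, le_min h1 (h1.trans (h₂ i).le)⟩
  refine ⟨key, ⟨fun _ => PMF.pure 0, key _ ?_⟩⟩
  intro i r hr
  rw [PMF.support_pure] at hr
  simp only [Set.mem_singleton_iff] at hr
  subst hr
  simp [(hp i).le]
end
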